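/- Let X ⊆ ℂ^N be compact and suppose the invertible elements of P(X) are dense in P(X). Then the polynomial hull of X coincides with the rational hull of X. -/

import Mathlib

open MvPolynomial

noncomputable def polyHull {N : ℕ} (K : Set (Fin N → ℂ)) : Set (Fin N → ℂ) :=
  {z | ∀ p : MvPolynomial (Fin N) ℂ,
    ‖eval z p‖ ≤ sSup ((fun x => ‖eval x p‖) '' K)}

def IsPolyConvex {N : ℕ} (K : Set (Fin N → ℂ)) : Prop := polyHull K = K

def rationalHull {N : ℕ} (K : Set (Fin N → ℂ)) : Set (Fin N → ℂ) :=
  {z | ∀ p : MvPolynomial (Fin N) ℂ, eval z p = 0 → ∃ x ∈ K, eval x p = 0}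

noncomputable def polyHull1 (S : Set ℂ) : Set ℂ :=
  {w | ∀ p : Polynomial ℂ, ‖p.eval w‖ ≤ sSup ((fun s => ‖p.eval s‖) '' S)}

noncomputable def PX {N : ℕ} (X : Set (Fin N → ℂ)) : Set C(X, ℂ) :=
  closure {f : C(X, ℂ) | ∃ p : MvPolynomial (Fin N) ℂ,
    ∀ x : X, f x = eval (x : Fin N → ℂ) p}

def SameGleasonPart {N : ℕ} (H : Set (Fin N → ℂ)) (x y : Fin N → ℂ) : Prop :=
  ∃ c ≥ (1 : ℝ), ∀ p : MvPolynomial (Fin N) ℂ,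
    (∀ z ∈ H, (eval z p).re ≤ 0) →
    c * (eval y p).re ≤ (eval x p).re ∧ c * (eval x p).re ≤ (eval y p).re

theorem stmt10 {N : ℕ} (X : Set (Fin N → ℂ)) (hX : IsCompact X)
    (hdense : PX X ⊆ closure {f ∈ PX X | ∃ g ∈ PX X, ∀ x, f x * g x = 1}) :
    polyHull X = rationalHull X := by
  haveI : CompactSpace X := isCompact_iff_compactSpace.mp hX
  ext z
  simp only [polyHull, rationalHull, Set.mem_setOf_eq]
  constructor
  · -- hard direction
    intro hz p hzp
    by_contra hno
    push_neg at hno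
    -- X nonempty
    rcases X.eq_empty_or_nonempty with hXe | hXne
    · have h1 := hz 1
      rw [hXe] at h1
      simp only [Set.image_empty, Real.sSup_empty, map_one, norm_one] at h1
      linarith
    -- basic bound coming from z ∈ polyHull X
    have hb : ∀ (q : MvPolynomial (Fin N) ℂ) (M : ℝ),
        (∀ x ∈ X, ‖eval x q‖ ≤ M) → ‖eval z q‖ ≤ M := by
      intro q M hM
      refine (hz q).trans (Real.sSup_le ?_ ?_)
      · rintro _ ⟨x, hx, rfl⟩; exact hM x hx
      · obtain ⟨x₀, hx₀⟩ := hXne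
        exact le_trans (norm_nonneg _) (hM x₀ hx₀)
    -- minimum of ‖p‖ on X
    obtain ⟨x₀, hx₀X, hmin⟩ :=
      hX.exists_isMinOn hXne (p.continuous_eval.norm.continuousOn)
    set δ : ℝ := ‖eval x₀ p‖ with hδdef
    have hδ : 0 < δ := norm_pos_iff.mpr (hno x₀ hx₀X)
    have hδle : ∀ x ∈ X, δ ≤ ‖eval x p‖ := fun x hx => hmin hx
    -- maximum of ‖p‖ on X
    obtain ⟨x₁, hx₁X, hmax⟩ :=
      hX.exists_isMaxOn hXne (p.continuous_eval.norm.continuousOn)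
    set Mp : ℝ := ‖eval x₁ p‖ with hMpdef
    have hMple : ∀ x ∈ X, ‖eval x p‖ ≤ Mp := fun x hx => hmax hx
    have hMp0 : 0 ≤ Mp := norm_nonneg _
    -- the restriction of p to X, as a continuous map
    set Rp : C(X, ℂ) :=
      ⟨fun x : X => eval (x : Fin N → ℂ) p,
        p.continuous_eval.comp continuous_subtype_val⟩ with hRpdef
    have hRpmem : Rp ∈ PX X := subset_closure ⟨p, fun x => rfl⟩
    have hcl := hdense hRpmem
    rw [Metric.mem_closure_iff] at hcl
    obtain ⟨f, ⟨hfPX, g, hgPX, hfg⟩, hdf⟩ := hcl (δ / 3) (by positivity)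
    have hdfx : ∀ x : X, ‖eval (x : Fin N → ℂ) p - f x‖ < δ / 3 := by
      intro x
      calc ‖eval (x : Fin N → ℂ) p - f x‖ = dist (Rp x) (f x) := by
            rw [dist_eq_norm]; rfl
        _ ≤ dist Rp f := ContinuousMap.dist_apply_le_dist x
        _ < δ / 3 := hdf
    set B : ℝ := 3 / (2 * δ) with hBdef
    have hB : 0 < B := by positivity
    have hBδ : B * δ = 3 / 2 := by rw [hBdef, div_mul_eq_mul_div, div_eq_iff (by positivity)]; ring
    -- lower bound for f, upper bounds for f and g
    have hflow : ∀ x : X, 2 * δ / 3 ≤ ‖f x‖ := by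
      intro x
      have h1 := hdfx x
      have h2 := hδle (x : Fin N → ℂ) x.2
      have h3 := norm_sub_norm_le (eval (x : Fin N → ℂ) p) (f x)
      linarith
    have hfup : ∀ x : X, ‖f x‖ ≤ Mp + δ := by
      intro x
      have h1 := hdfx x
      have h2 := hMple (x : Fin N → ℂ) x.2
      have h3 := norm_sub_norm_le (f x) (eval (x : Fin N → ℂ) p)
      rw [norm_sub_rev] at h3
      linarith
    have hgup : ∀ x : X, ‖g x‖ ≤ B := by
      intro x
      have h1 : ‖f x‖ * ‖g x‖ = 1 := by rw [← norm_mul, hfg x, norm_one]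
      have h2 := hflow x
      have h3 : 0 ≤ ‖g x‖ := norm_nonneg _
      rw [hBdef, le_div_iff₀ (by positivity)]
      nlinarith
    -- choose ε'
    set D : ℝ := Mp + 2 * δ + 2 * B + 3 with hDdef
    have hD : 0 < D := by positivity
    set ε : ℝ := min 1 (1 / (8 * D)) with hεdef
    have hε : 0 < ε := lt_min one_pos (by positivity)
    have hε1 : ε ≤ 1 := min_le_left _ _
    have hεD : ε * (8 * D) ≤ 1 := by
      rw [← le_div_iff₀ (by positivity)]
      exact min_le_right _ _
    -- approximate f and g by polynomials
    have hfc : f ∈ closure {h : C(X, ℂ) | ∃ q : MvPolynomial (Fin N) ℂ,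
        ∀ x : X, h x = eval (x : Fin N → ℂ) q} := hfPX
    rw [Metric.mem_closure_iff] at hfc
    obtain ⟨P', ⟨P, hP⟩, hdP⟩ := hfc ε hε
    have hgc : g ∈ closure {h : C(X, ℂ) | ∃ q : MvPolynomial (Fin N) ℂ,
        ∀ x : X, h x = eval (x : Fin N → ℂ) q} := hgPX
    rw [Metric.mem_closure_iff] at hgc
    obtain ⟨Q', ⟨Q, hQ⟩, hdQ⟩ := hgc ε hε
    have hPf : ∀ x : X, ‖eval (x : Fin N → ℂ) P - f x‖ < ε := by
      intro x
      calc ‖eval (x : Fin N → ℂ) P - f x‖ = dist (f x) (P' x) := by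
            rw [dist_eq_norm, hP x, norm_sub_rev]
        _ ≤ dist f P' := ContinuousMap.dist_apply_le_dist x
        _ < ε := hdP
    have hQg : ∀ x : X, ‖eval (x : Fin N → ℂ) Q - g x‖ < ε := by
      intro x
      calc ‖eval (x : Fin N → ℂ) Q - g x‖ = dist (g x) (Q' x) := by
            rw [dist_eq_norm, hQ x, norm_sub_rev]
        _ ≤ dist g Q' := ContinuousMap.dist_apply_le_dist x
        _ < ε := hdQ
    -- bound ‖eval z P‖
    have hzP : ‖eval z P‖ ≤ δ / 3 + ε := by
      have h := hb (P - p) (δ / 3 + ε) ?_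
      · rwa [map_sub, hzp, sub_zero] at h
      · intro x hx
        rw [map_sub]
        have h1 := hPf ⟨x, hx⟩
        have h2 := hdfx ⟨x, hx⟩
        have h3 := norm_add_le (eval x P - f ⟨x, hx⟩) (f ⟨x, hx⟩ - eval x p)
        rw [norm_sub_rev (eval x p)] at h2
        rw [sub_add_sub_cancel] at h3
        linarith
    -- bound ‖eval z Q‖
    have hzQ : ‖eval z Q‖ ≤ B + ε := by
      refine hb Q (B + ε) ?_
      intro x hx
      have h1 := hQg ⟨x, hx⟩
      have h2 := hgup ⟨x, hx⟩
      have h3 := norm_add_le (eval x Q - g ⟨x, hx⟩) (g ⟨x, hx⟩)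
      rw [sub_add_cancel] at h3
      linarith
    -- bound ‖eval z (P*Q) - 1‖
    have hzPQ : ‖eval z (P * Q) - 1‖ ≤ ε * (B + ε) + (Mp + δ) * ε := by
      have h := hb (P * Q - 1) (ε * (B + ε) + (Mp + δ) * ε) ?_
      · rwa [map_sub, map_one] at h
      · intro x hx
        rw [map_sub, map_one, map_mul]
        set a := eval x P
        set b := eval x Q
        set c := f ⟨x, hx⟩
        set d := g ⟨x, hx⟩
        have hcd : c * d = 1 := hfg ⟨x, hx⟩
        have key : a * b - 1 = (a - c) * b + c * (b - d) := by
          rw [← hcd]; ring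
        rw [key]
        have h1 : ‖(a - c) * b + c * (b - d)‖ ≤ ‖a - c‖ * ‖b‖ + ‖c‖ * ‖b - d‖ := by
          refine le_trans (norm_add_le _ _) ?_
          rw [norm_mul, norm_mul]
        have h2 := hPf ⟨x, hx⟩
        have h3 := hQg ⟨x, hx⟩
        have h4 := hfup ⟨x, hx⟩
        have h5 := hgup ⟨x, hx⟩
        have hbB : ‖b‖ ≤ B + ε := by
          have h6 := norm_add_le (b - d) d
          rw [sub_add_cancel] at h6
          linarith
        have h8 : ‖a - c‖ * ‖b‖ ≤ ε * (B + ε) :=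
          mul_le_mul h2.le hbB (norm_nonneg _) hε.le
        have h9 : ‖c‖ * ‖b - d‖ ≤ (Mp + δ) * ε :=
          mul_le_mul h4 h3.le (norm_nonneg _) (by positivity)
        linarith
    -- combine
    have hsplit : (1 : ℝ) = ‖(1 : ℂ)‖ := by simp
    have htri : (1 : ℝ) ≤ ‖eval z (P * Q) - 1‖ + ‖eval z P‖ * ‖eval z Q‖ := by
      have h1 : ‖(1 : ℂ)‖ ≤ ‖(1 : ℂ) - eval z (P * Q)‖ + ‖eval z (P * Q)‖ := by
        have h2 : (1 : ℂ) - eval z (P * Q) + eval z (P * Q) = 1 := by ring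
        calc ‖(1 : ℂ)‖ = ‖(1 : ℂ) - eval z (P * Q) + eval z (P * Q)‖ := by rw [h2]
          _ ≤ _ := norm_add_le _ _
      rw [norm_sub_rev] at h1
      rw [map_mul, norm_mul] at h1
      rw [hsplit]
      rw [map_mul]
      linarith
    have hmul : ‖eval z P‖ * ‖eval z Q‖ ≤ (δ / 3 + ε) * (B + ε) :=
      mul_le_mul hzP hzQ (norm_nonneg _) (by positivity)
    have hfinal : (1 : ℝ) ≤ ε * (B + ε) + (Mp + δ) * ε + (δ / 3 + ε) * (B + ε) := by
      linarith
    -- arithmetic contradiction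
    have hexp : ε * (B + ε) + (Mp + δ) * ε + (δ / 3 + ε) * (B + ε)
        = δ * B / 3 + ε * (2 * B + 2 * ε + Mp + δ + δ / 3) := by ring
    have hcoef : 2 * B + 2 * ε + Mp + δ + δ / 3 ≤ D := by
      rw [hDdef]; linarith
    have hmono : ε * (2 * B + 2 * ε + Mp + δ + δ / 3) ≤ ε * D :=
      mul_le_mul_of_nonneg_left hcoef hε.le
    have hεDle : ε * D ≤ 1 / 8 := by nlinarith
    have hδB : δ * B / 3 = 1 / 2 := by rw [mul_comm]; rw [hBδ]; ring
    rw [hexp, hδB] at hfinal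
    linarith
  · -- easy direction
    intro hz p
    have h0 : eval z (p - C (eval z p)) = 0 := by
      rw [map_sub, eval_C, sub_self]
    obtain ⟨x, hxX, hx0⟩ := hz _ h0
    rw [map_sub, eval_C, sub_eq_zero] at hx0
    have hbdd : BddAbove ((fun x => ‖eval x p‖) '' X) :=
      (hX.image p.continuous_eval.norm).bddAbove
    calc ‖eval z p‖ = ‖eval x p‖ := by rw [hx0]
      _ ≤ sSup ((fun x => ‖eval x p‖) '' X) := le_csSup hbdd ⟨x, hxX, rfl⟩
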